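/- Let a < b be real numbers, let δ ∈ (0,1), let N ≥ 1, and let ρ̂₁, …, ρ̂_N be independent identically distributed random variables with values in [a,b] and common law P*. Let m = E[ρ̃] and d = E[|ρ̃ − m|] denote the mean and mean-absolute deviation under P*, and let m̂ = (1/N)∑_{i=1}^N ρ̂_i and d̂ = (1/N)∑_{i=1}^N |ρ̂_i − m̂| denote the empirical mean and empirical MAD. Then with probability at least 1 − δ, both |m̂ − m| ≤ (b−a)·√(log(4/δ)/(2N)) and |d̂ − d| ≤ (b−a)·√(9·log(4/δ)/(2N)) hold. -/

import Mathlib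

open MeasureTheory ProbabilityTheory

lemma aux_ineq (p : ℝ) (hp0 : 0 ≤ p) (hp1 : p ≤ 1) (h : ℝ) :
    (1 - p) + p * Real.exp h ≤ Real.exp (p * h + h ^ 2 / 8) := by
  rcases eq_or_lt_of_le hp1 with rfl | hp1
  · simpa using Real.exp_le_exp.2 (by nlinarith [sq_nonneg h] : h ≤ 1 * h + h ^ 2 / 8)
  set D : ℝ → ℝ := fun x => 1 - p + p * Real.exp x with hD
  have hDpos : ∀ x, 0 < D x := fun x => by
    have h1 : 0 ≤ p * Real.exp x := mul_nonneg hp0 (Real.exp_pos x).le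
    simp only [hD]; linarith
  set u : ℝ → ℝ := fun x => Real.log (D x) - p * x - x ^ 2 / 8 with hu
  set v : ℝ → ℝ := fun x => p * Real.exp x / D x - p - x / 4 with hv
  have hDderiv : ∀ x, HasDerivAt D (p * Real.exp x) x := fun x => by
    exact ((Real.hasDerivAt_exp x).const_mul p).const_add (1 - p)
  have huderiv : ∀ x, HasDerivAt u (v x) x := fun x => by
    have h1 : HasDerivAt (fun x => Real.log (D x)) (p * Real.exp x / D x) x :=
      (hDderiv x).log (hDpos x).ne'
    have h2 : HasDerivAt (fun x : ℝ => p * x) p x := by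
      simpa using (hasDerivAt_id x).const_mul p
    have h3 : HasDerivAt (fun x : ℝ => x ^ 2 / 8) (x / 4) x := by
      have := (hasDerivAt_pow 2 x).div_const 8
      refine this.congr_deriv ?_; norm_num; ring
    exact (h1.sub h2).sub h3
  have hvderiv : ∀ x, HasDerivAt v (p * (1 - p) * Real.exp x / (D x) ^ 2 - 1 / 4) x := fun x => by
    have h1 : HasDerivAt (fun x => p * Real.exp x / D x)
        ((p * Real.exp x * D x - p * Real.exp x * (p * Real.exp x)) / (D x) ^ 2) x :=
      ((Real.hasDerivAt_exp x).const_mul p).div (hDderiv x) (hDpos x).ne'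
    have h2 : HasDerivAt (fun x : ℝ => x / 4) (1 / 4 : ℝ) x := by
      simpa using (hasDerivAt_id x).div_const 4
    have h3 := (h1.sub_const p).sub h2
    refine h3.congr_deriv ?_
    have hne := (hDpos x).ne'
    simp only [hD]
    field_simp
    ring
  have hvnonpos : ∀ x, p * (1 - p) * Real.exp x / (D x) ^ 2 - 1 / 4 ≤ 0 := fun x => by
    rw [sub_nonpos, div_le_iff₀ (pow_pos (hDpos x) 2)]
    have hDx : D x = 1 - p + p * Real.exp x := rfl
    nlinarith [Real.exp_pos x, sq_nonneg (1 - p - p * Real.exp x)]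
  have hv0 : v 0 = 0 := by
    simp only [hv, hD, Real.exp_zero, mul_one]
    have : 1 - p + p = 1 := by ring
    rw [this]
    simp
  have hvanti : Antitone v :=
    antitone_of_deriv_nonpos (fun x => (hvderiv x).differentiableAt)
      (fun x => by rw [(hvderiv x).deriv]; exact hvnonpos x)
  have hu0 : u 0 = 0 := by
    simp only [hu, hD, Real.exp_zero, mul_one]
    have : 1 - p + p = 1 := by ring
    rw [this]; simp
  have hkey : ∀ x, u x ≤ 0 := by
    intro x
    rcases le_total 0 x with hx | hx
    · have hanti : AntitoneOn u (Set.Ici 0) := by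
        refine antitoneOn_of_deriv_nonpos (convex_Ici 0)
          (fun y _ => ((huderiv y).continuousAt).continuousWithinAt)
          (fun y _ => ((huderiv y).differentiableAt).differentiableWithinAt) ?_
        intro y hy
        rw [(huderiv y).deriv]
        rw [interior_Ici] at hy
        calc v y ≤ v 0 := hvanti (le_of_lt hy)
          _ = 0 := hv0
      have := hanti (Set.self_mem_Ici) (Set.mem_Ici.2 hx) hx
      rwa [hu0] at this
    · have hmono : MonotoneOn u (Set.Iic 0) := by
        refine monotoneOn_of_deriv_nonneg (convex_Iic 0)
          (fun y _ => ((huderiv y).continuousAt).continuousWithinAt)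
          (fun y _ => ((huderiv y).differentiableAt).differentiableWithinAt) ?_
        intro y hy
        rw [(huderiv y).deriv]
        rw [interior_Iic] at hy
        have : v 0 ≤ v y := hvanti (le_of_lt hy)
        rw [hv0] at this
        exact this
      have := hmono (Set.mem_Iic.2 hx) (Set.self_mem_Iic) hx
      rwa [hu0] at this
  have := hkey h
  have hlog : Real.log (D h) ≤ p * h + h ^ 2 / 8 := by
    simp only [hu] at this; linarith
  calc (1 - p) + p * Real.exp h = D h := rfl
    _ ≤ Real.exp (p * h + h ^ 2 / 8) := by
        rw [← Real.exp_log (hDpos h)]; exact Real.exp_le_exp.2 hlog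

lemma integrable_exp_mul_of_bounded {Ω : Type*} [MeasurableSpace Ω] (μ : Measure Ω)
    [IsProbabilityMeasure μ] (X : Ω → ℝ) (hX : Measurable X) (a b t : ℝ)
    (hr : ∀ ω, X ω ∈ Set.Icc a b) :
    Integrable (fun ω => Real.exp (t * X ω)) μ := by
  refine ⟨(((hX.const_mul t)).exp).aestronglyMeasurable, ?_⟩
  refine MeasureTheory.HasFiniteIntegral.of_bounded
    (C := max (Real.exp (t * a)) (Real.exp (t * b))) (ae_of_all _ fun ω => ?_)
  rw [Real.norm_eq_abs, abs_of_pos (Real.exp_pos _)]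
  rcases le_total 0 t with ht | ht
  · exact le_max_of_le_right (Real.exp_le_exp.2 (mul_le_mul_of_nonneg_left (hr ω).2 ht))
  · exact le_max_of_le_left (Real.exp_le_exp.2 (mul_le_mul_of_nonpos_left (hr ω).1 ht))

lemma integrable_of_bounded' {Ω : Type*} [MeasurableSpace Ω] (μ : Measure Ω)
    [IsProbabilityMeasure μ] (X : Ω → ℝ) (hX : Measurable X) (a b : ℝ)
    (hr : ∀ ω, X ω ∈ Set.Icc a b) : Integrable X μ := by
  refine ⟨hX.aestronglyMeasurable, ?_⟩
  refine MeasureTheory.HasFiniteIntegral.of_bounded (C := max |a| |b|) (ae_of_all _ fun ω => ?_)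
  rw [Real.norm_eq_abs]
  exact abs_le_max_abs_abs (hr ω).1 (hr ω).2

lemma mean_mem_Icc {Ω : Type*} [MeasurableSpace Ω] (μ : Measure Ω)
    [IsProbabilityMeasure μ] (X : Ω → ℝ) (hX : Measurable X) (a b : ℝ)
    (hr : ∀ ω, X ω ∈ Set.Icc a b) : (∫ ω, X ω ∂μ) ∈ Set.Icc a b := by
  have hint := integrable_of_bounded' μ X hX a b hr
  constructor
  · calc a = ∫ _, a ∂μ := by simp
      _ ≤ ∫ ω, X ω ∂μ := integral_mono (integrable_const a) hint (fun ω => (hr ω).1)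
  · calc (∫ ω, X ω ∂μ) ≤ ∫ _, b ∂μ :=
        integral_mono hint (integrable_const b) (fun ω => (hr ω).2)
      _ = b := by simp

lemma mgf_le_hoeffding {Ω : Type*} [MeasurableSpace Ω] (μ : Measure Ω)
    [IsProbabilityMeasure μ] (X : Ω → ℝ) (hX : Measurable X) (a b t : ℝ) (hab : a < b)
    (hr : ∀ ω, X ω ∈ Set.Icc a b) :
    mgf X μ t ≤ Real.exp (t * (∫ ω, X ω ∂μ) + t ^ 2 * (b - a) ^ 2 / 8) := by
  have hba : (0:ℝ) < b - a := sub_pos.2 hab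
  set m := ∫ ω, X ω ∂μ with hm
  have hmab := mean_mem_Icc μ X hX a b hr
  -- pointwise convexity bound
  have hpt : ∀ ω, Real.exp (t * X ω) ≤
      ((b - X ω) / (b - a)) * Real.exp (t * a) + ((X ω - a) / (b - a)) * Real.exp (t * b) := by
    intro ω
    have hx := hr ω
    have hl1 : 0 ≤ (b - X ω) / (b - a) := div_nonneg (by linarith [hx.2]) hba.le
    have hl2 : 0 ≤ (X ω - a) / (b - a) := div_nonneg (by linarith [hx.1]) hba.le
    have hsum : (b - X ω) / (b - a) + (X ω - a) / (b - a) = 1 := by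
      field_simp
      ring
    have := convexOn_exp.2 (Set.mem_univ (t * a)) (Set.mem_univ (t * b)) hl1 hl2 hsum
    have harg : (b - X ω) / (b - a) * (t * a) + (X ω - a) / (b - a) * (t * b) = t * X ω := by
      field_simp; ring
    rw [smul_eq_mul, smul_eq_mul, smul_eq_mul, smul_eq_mul, harg] at this
    exact this
  have hint_exp := integrable_exp_mul_of_bounded μ X hX a b t hr
  have hintX := integrable_of_bounded' μ X hX a b hr
  set c1 := Real.exp (t * a) / (b - a) with hc1
  set c2 := Real.exp (t * b) / (b - a) with hc2
  have hpt' : ∀ ω, Real.exp (t * X ω) ≤ c1 * (b - X ω) + c2 * (X ω - a) := by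
    intro ω
    have := hpt ω
    rw [hc1, hc2]
    calc Real.exp (t * X ω) ≤ _ := this
      _ = _ := by ring
  have hint_rhs : Integrable (fun ω => c1 * (b - X ω) + c2 * (X ω - a)) μ :=
    (((integrable_const b).sub hintX).const_mul c1).add
      ((hintX.sub (integrable_const a)).const_mul c2)
  have i1 : Integrable (fun ω => c1 * (b - X ω)) μ :=
    ((integrable_const b).sub hintX).const_mul c1
  have i2 : Integrable (fun ω => c2 * (X ω - a)) μ :=
    (hintX.sub (integrable_const a)).const_mul c2
  have hstep : mgf X μ t ≤ c1 * (b - m) + c2 * (m - a) := by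
    have h1 := integral_mono hint_exp hint_rhs hpt'
    refine h1.trans_eq ?_
    rw [integral_add i1 i2, MeasureTheory.integral_const_mul, MeasureTheory.integral_const_mul,
      integral_sub (integrable_const b) hintX, integral_sub hintX (integrable_const a)]
    simp [hm]
  refine hstep.trans ?_
  set p := (m - a) / (b - a) with hp
  have hp0 : 0 ≤ p := div_nonneg (by linarith [hmab.1]) hba.le
  have hp1 : p ≤ 1 := by
    rw [hp, div_le_one hba]
    linarith [hmab.2]
  have haux := aux_ineq p hp0 hp1 (t * (b - a))
  have hrw : c1 * (b - m) + c2 * (m - a) =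
      Real.exp (t * a) * ((1 - p) + p * Real.exp (t * (b - a))) := by
    rw [hc1, hc2, hp]
    have : Real.exp (t * b) = Real.exp (t * a) * Real.exp (t * (b - a)) := by
      rw [← Real.exp_add]; ring_nf
    rw [this]
    field_simp
    ring
  rw [hrw]
  calc Real.exp (t * a) * ((1 - p) + p * Real.exp (t * (b - a)))
      ≤ Real.exp (t * a) * Real.exp (p * (t * (b - a)) + (t * (b - a)) ^ 2 / 8) := by
        exact mul_le_mul_of_nonneg_left haux (Real.exp_pos _).le
    _ = Real.exp (t * a + p * (t * (b - a)) + (t * (b - a)) ^ 2 / 8) := by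
        rw [← Real.exp_add]; ring_nf
    _ = Real.exp (t * m + t ^ 2 * (b - a) ^ 2 / 8) := by
        congr 1
        have : p * (t * (b - a)) = t * (m - a) := by
          rw [hp]; field_simp
        rw [this]; ring


lemma hoeffding_tail {Ω : Type*} [MeasurableSpace Ω] (Pr : Measure Ω)
    [IsProbabilityMeasure Pr] (N : ℕ) (X : Fin N → Ω → ℝ) (hmeas : ∀ i, Measurable (X i))
    (hindep : iIndepFun X Pr) (a b : ℝ) (hab : a < b)
    (hr : ∀ i ω, X i ω ∈ Set.Icc a b) (ε : ℝ) (hε : 0 ≤ ε) :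
    (Pr {ω | (∑ i, ∫ ω', X i ω' ∂Pr) + N * ε ≤ ∑ i, X i ω}).toReal ≤
      Real.exp (-2 * N * ε ^ 2 / (b - a) ^ 2) := by
  have hba : (0:ℝ) < b - a := sub_pos.2 hab
  set t : ℝ := 4 * ε / (b - a) ^ 2 with ht
  have ht0 : 0 ≤ t := div_nonneg (by linarith) (sq_nonneg _)
  set M : ℝ := ∑ i, ∫ ω', X i ω' ∂Pr with hM
  have hint : ∀ i ∈ Finset.univ, Integrable (fun ω => Real.exp (t * X i ω)) Pr :=
    fun i _ => integrable_exp_mul_of_bounded Pr (X i) (hmeas i) a b t (hr i)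
  have hsum_int : Integrable (fun ω => Real.exp (t * (∑ i, X i) ω)) Pr :=
    hindep.integrable_exp_mul_sum hmeas hint
  have hset : {ω | M + ↑N * ε ≤ ∑ i, X i ω} = {ω | M + ↑N * ε ≤ (∑ i, X i) ω} := by
    ext ω; simp [Finset.sum_apply]
  rw [hset]
  have hch := measure_ge_le_exp_mul_mgf (X := ∑ i, X i) (μ := Pr) (t := t)
    (M + N * ε) ht0 hsum_int
  refine hch.trans ?_
  rw [hindep.mgf_sum hmeas]
  have hprod : (∏ i, mgf (X i) Pr t) ≤
      ∏ i : Fin N, Real.exp (t * (∫ ω, X i ω ∂Pr) + t ^ 2 * (b - a) ^ 2 / 8) := by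
    refine Finset.prod_le_prod (fun i _ => mgf_nonneg) (fun i _ => ?_)
    exact mgf_le_hoeffding Pr (X i) (hmeas i) a b t hab (hr i)
  calc Real.exp (-t * (M + N * ε)) * ∏ i, mgf (X i) Pr t
      ≤ Real.exp (-t * (M + N * ε)) *
        ∏ i : Fin N, Real.exp (t * (∫ ω, X i ω ∂Pr) + t ^ 2 * (b - a) ^ 2 / 8) :=
        mul_le_mul_of_nonneg_left hprod (Real.exp_pos _).le
    _ = Real.exp (-t * (M + N * ε) +
        ∑ i : Fin N, (t * (∫ ω, X i ω ∂Pr) + t ^ 2 * (b - a) ^ 2 / 8)) := by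
        rw [← Real.exp_sum, ← Real.exp_add]
    _ ≤ Real.exp (-2 * N * ε ^ 2 / (b - a) ^ 2) := by
        apply Real.exp_le_exp.2
        rw [Finset.sum_add_distrib, ← Finset.mul_sum, Finset.sum_const, Finset.card_univ,
          Fintype.card_fin, ← hM]
        have hbane : (b - a) ^ 2 ≠ 0 := (pow_pos hba 2).ne'
        rw [ht]
        field_simp
        rw [nsmul_eq_mul]
        field_simp
        ring_nf
        nlinarith [sq_nonneg ((b-a)^2), sq_nonneg ε, Nat.cast_nonneg (α := ℝ) N, sq_nonneg (ε * (N:ℝ))]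

set_option maxHeartbeats 1000000 in
theorem stmt13 (a b : ℝ) (hab : a < b) (δ : ℝ) (hδ : δ ∈ Set.Ioo (0 : ℝ) 1)
    (N : ℕ) (hN : 1 ≤ N)
    (Ω : Type*) [MeasurableSpace Ω] (Pr : Measure Ω) [IsProbabilityMeasure Pr]
    (X : Fin N → Ω → ℝ) (hmeas : ∀ i, Measurable (X i))
    (hindep : iIndepFun X Pr)
    (Pstar : Measure ℝ) [IsProbabilityMeasure Pstar]
    (hdist : ∀ i, Measure.map (X i) Pr = Pstar)
    (hrange : ∀ i ω, X i ω ∈ Set.Icc a b) :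
    let m : ℝ := ∫ x, x ∂Pstar
    let d : ℝ := ∫ x, |x - m| ∂Pstar
    let mhat : Ω → ℝ := fun ω => (∑ i, X i ω) / N
    let dhat : Ω → ℝ := fun ω => (∑ i, |X i ω - mhat ω|) / N
    ENNReal.ofReal (1 - δ) ≤
      Pr {ω | |mhat ω - m| ≤ (b - a) * Real.sqrt (Real.log (4 / δ) / (2 * N)) ∧
             |dhat ω - d| ≤ (b - a) * Real.sqrt (9 * Real.log (4 / δ) / (2 * N))} := by
  intro m d mhat dhat
  obtain ⟨hδ0, hδ1⟩ := hδ
  have hNpos : (0:ℝ) < N := by exact_mod_cast hN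
  have hba : (0:ℝ) < b - a := sub_pos.2 hab
  set L : ℝ := Real.log (4 / δ) with hL
  have hL0 : 0 ≤ L := Real.log_nonneg (by rw [le_div_iff₀ hδ0]; linarith)
  set ε₁ : ℝ := (b - a) * Real.sqrt (L / (2 * N)) with hε₁
  have hε₁0 : 0 ≤ ε₁ := mul_nonneg hba.le (Real.sqrt_nonneg _)
  -- the sample mean under Pr equals m
  have hmean : ∀ i, ∫ ω, X i ω ∂Pr = m := by
    intro i
    have h0 : m = ∫ x, x ∂(Measure.map (X i) Pr) := by rw [hdist i]
    rw [h0]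
    exact (integral_map (hmeas i).aemeasurable
      measurable_id.aestronglyMeasurable).symm
  have hm_mem : m ∈ Set.Icc a b := by
    rw [← hmean ⟨0, hN⟩]
    exact mean_mem_Icc Pr _ (hmeas _) a b (hrange _)
  -- the MAD variables
  set Y : Fin N → Ω → ℝ := fun i ω => |X i ω - m| with hY
  have hYmeas : ∀ i, Measurable (Y i) := fun i => ((hmeas i).sub_const m).abs
  have hYindep : iIndepFun Y Pr :=
    hindep.comp (fun _ x => |x - m|) (fun _ => (measurable_id.sub_const m).abs)
  have hYrange : ∀ i ω, Y i ω ∈ Set.Icc 0 (b - a) := by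
    intro i ω
    constructor
    · exact abs_nonneg _
    · rw [abs_le]
      have h1 := (hrange i ω).1; have h2 := (hrange i ω).2
      have h3 := hm_mem.1; have h4 := hm_mem.2
      constructor <;> linarith
  have hYmean : ∀ i, ∫ ω, Y i ω ∂Pr = d := by
    intro i
    have h0 : d = ∫ x, |x - m| ∂(Measure.map (X i) Pr) := by rw [hdist i]
    rw [h0]
    exact (integral_map (hmeas i).aemeasurable
      ((measurable_id.sub_const m).abs).aestronglyMeasurable).symm
  -- the four bad events
  set G1 := {ω | (∑ i, ∫ ω', X i ω' ∂Pr) + N * ε₁ ≤ ∑ i, X i ω} with hG1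
  set G2 := {ω | (∑ i, ∫ ω', (-X i) ω' ∂Pr) + N * ε₁ ≤ ∑ i, (-X i) ω} with hG2
  set G3 := {ω | (∑ i, ∫ ω', Y i ω' ∂Pr) + N * ε₁ ≤ ∑ i, Y i ω} with hG3
  set G4 := {ω | (∑ i, ∫ ω', (-Y i) ω' ∂Pr) + N * ε₁ ≤ ∑ i, (-Y i) ω} with hG4
  -- tail bounds
  have hexp : Real.exp (-2 * N * ε₁ ^ 2 / (b - a) ^ 2) = δ / 4 := by
    have hsq : ε₁ ^ 2 = (b - a) ^ 2 * (L / (2 * N)) := by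
      rw [hε₁, mul_pow, Real.sq_sqrt (by positivity)]
    rw [hsq]
    have harg : -2 * N * ((b - a) ^ 2 * (L / (2 * N))) / (b - a) ^ 2 = -L := by
      field_simp
    rw [harg, hL, ← Real.log_inv, Real.exp_log (by positivity)]
    rw [inv_div]
  have hXneg_meas : ∀ i, Measurable (-X i) := fun i => (hmeas i).neg
  have hXneg_indep : iIndepFun (fun i => -X i) Pr :=
    hindep.comp (fun _ x => -x) (fun _ => measurable_neg)
  have hXneg_range : ∀ i ω, (-X i) ω ∈ Set.Icc (-b) (-a) := fun i ω =>
    ⟨neg_le_neg (hrange i ω).2, neg_le_neg (hrange i ω).1⟩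
  have hYneg_meas : ∀ i, Measurable (-Y i) := fun i => (hYmeas i).neg
  have hYneg_indep : iIndepFun (fun i => -Y i) Pr :=
    hYindep.comp (fun _ x => -x) (fun _ => measurable_neg)
  have hYneg_range : ∀ i ω, (-Y i) ω ∈ Set.Icc (-(b - a)) (-0) := fun i ω =>
    ⟨neg_le_neg (hYrange i ω).2, neg_le_neg (hYrange i ω).1⟩
  have hT1 : (Pr G1).toReal ≤ δ / 4 := by
    have := hoeffding_tail Pr N X hmeas hindep a b hab hrange ε₁ hε₁0
    rwa [hexp] at this
  have hT2 : (Pr G2).toReal ≤ δ / 4 := by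
    have := hoeffding_tail Pr N (fun i => -X i) hXneg_meas hXneg_indep (-b) (-a)
      (by linarith) hXneg_range ε₁ hε₁0
    have heq : -a - -b = b - a := by ring
    rwa [heq, hexp] at this
  have hT3 : (Pr G3).toReal ≤ δ / 4 := by
    have := hoeffding_tail Pr N Y hYmeas hYindep 0 (b - a) (by linarith) hYrange ε₁ hε₁0
    have heq : b - a - 0 = b - a := by ring
    rwa [heq, hexp] at this
  have hT4 : (Pr G4).toReal ≤ δ / 4 := by
    have := hoeffding_tail Pr N (fun i => -Y i) hYneg_meas hYneg_indep (-(b - a)) (-0)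
      (by linarith) hYneg_range ε₁ hε₁0
    have heq : -0 - -(b - a) = b - a := by ring
    rwa [heq, hexp] at this
  -- good event inclusion
  set T := {ω | |mhat ω - m| ≤ (b - a) * Real.sqrt (Real.log (4 / δ) / (2 * N)) ∧
             |dhat ω - d| ≤ (b - a) * Real.sqrt (9 * Real.log (4 / δ) / (2 * N))} with hT
  have hincl : (G1 ∪ G2 ∪ G3 ∪ G4)ᶜ ⊆ T := by
    intro ω hω
    simp only [Set.mem_compl_iff, Set.mem_union, not_or] at hω
    obtain ⟨⟨⟨h1, h2⟩, h3⟩, h4⟩ := hω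
    simp only [hG1, Set.mem_setOf_eq, not_le] at h1
    simp only [hG2, Set.mem_setOf_eq, not_le] at h2
    simp only [hG3, Set.mem_setOf_eq, not_le] at h3
    simp only [hG4, Set.mem_setOf_eq, not_le] at h4
    simp only [Pi.neg_apply, integral_neg, Finset.sum_neg_distrib] at h2 h4
    rw [Finset.sum_congr rfl (fun i _ => hmean i), Finset.sum_const, Finset.card_univ,
      Fintype.card_fin, nsmul_eq_mul] at h1 h2
    rw [Finset.sum_congr rfl (fun i _ => hYmean i), Finset.sum_const, Finset.card_univ,
      Fintype.card_fin, nsmul_eq_mul] at h3 h4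
    have hm_close : |mhat ω - m| ≤ ε₁ := by
      have e : mhat ω - m = ((∑ i, X i ω) - N * m) / N := by
        show (∑ i, X i ω) / (N:ℝ) - m = _
        field_simp
      rw [e, abs_div, abs_of_pos hNpos, div_le_iff₀ hNpos, abs_le]
      constructor <;> nlinarith
    have hdt_close : |(∑ i, Y i ω) / N - d| ≤ ε₁ := by
      have e : (∑ i, Y i ω) / (N:ℝ) - d = ((∑ i, Y i ω) - N * d) / N := by
        field_simp
      rw [e, abs_div, abs_of_pos hNpos, div_le_iff₀ hNpos, abs_le]
      constructor <;> nlinarith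
    have hdd : |dhat ω - (∑ i, Y i ω) / N| ≤ |mhat ω - m| := by
      have e : dhat ω - (∑ i, Y i ω) / N = (∑ i, (|X i ω - mhat ω| - Y i ω)) / N := by
        show (∑ i, |X i ω - mhat ω|) / (N:ℝ) - _ = _
        rw [Finset.sum_sub_distrib, sub_div]
      rw [e, abs_div, abs_of_pos hNpos, div_le_iff₀ hNpos]
      calc |∑ i, (|X i ω - mhat ω| - Y i ω)|
          ≤ ∑ i, |(|X i ω - mhat ω| - Y i ω)| := Finset.abs_sum_le_sum_abs _ _
        _ ≤ ∑ _i : Fin N, |mhat ω - m| := by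
            refine Finset.sum_le_sum (fun i _ => ?_)
            calc |(|X i ω - mhat ω| - Y i ω)| = |(|X i ω - mhat ω| - |X i ω - m|)| := rfl
              _ ≤ |(X i ω - mhat ω) - (X i ω - m)| := abs_abs_sub_abs_le_abs_sub _ _
              _ = |mhat ω - m| := by rw [abs_sub_comm]; ring_nf
        _ = |mhat ω - m| * N := by
            rw [Finset.sum_const, Finset.card_univ, Fintype.card_fin, nsmul_eq_mul]; ring
    have e1 : ε₁ = (b - a) * Real.sqrt (Real.log (4 / δ) / (2 * ↑N)) := by rw [hε₁]
    have e9 : (b - a) * Real.sqrt (9 * Real.log (4 / δ) / (2 * ↑N)) = 3 * ε₁ := by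
      rw [hε₁]
      rw [show (9 : ℝ) * Real.log (4 / δ) / (2 * ↑N) = 9 * (Real.log (4 / δ) / (2 * ↑N)) by ring]
      rw [Real.sqrt_mul (by norm_num : (0:ℝ) ≤ 9)]
      rw [show Real.sqrt 9 = 3 by
        rw [show (9:ℝ) = 3 ^ 2 by norm_num, Real.sqrt_sq (by norm_num)]]
      rw [hL]
      ring
    have hgoal2 : |dhat ω - d| ≤ (b - a) * Real.sqrt (9 * Real.log (4 / δ) / (2 * ↑N)) := by
      rw [e9]
      calc |dhat ω - d| ≤ |dhat ω - (∑ i, Y i ω) / N| + |(∑ i, Y i ω) / N - d| :=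
          abs_sub_le _ _ _
        _ ≤ |mhat ω - m| + ε₁ := add_le_add hdd hdt_close
        _ ≤ ε₁ + ε₁ := add_le_add hm_close le_rfl
        _ ≤ 3 * ε₁ := by linarith
    rw [hT]
    exact ⟨e1 ▸ hm_close, hgoal2⟩
  -- measure bookkeeping
  have hG_le : ∀ G : Set Ω, (Pr G).toReal ≤ δ / 4 → Pr G ≤ ENNReal.ofReal (δ / 4) := by
    intro G hG
    rw [← ENNReal.ofReal_toReal (measure_ne_top Pr G)]
    exact ENNReal.ofReal_le_ofReal hG
  have hunion : Pr (G1 ∪ G2 ∪ G3 ∪ G4) ≤ ENNReal.ofReal δ := by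
    calc Pr (G1 ∪ G2 ∪ G3 ∪ G4) ≤ Pr (G1 ∪ G2 ∪ G3) + Pr G4 := measure_union_le _ _
      _ ≤ (Pr (G1 ∪ G2) + Pr G3) + Pr G4 := add_le_add_left (measure_union_le _ _) _
      _ ≤ ((Pr G1 + Pr G2) + Pr G3) + Pr G4 :=
          add_le_add_left (add_le_add_left (measure_union_le _ _) _) _
      _ ≤ ((ENNReal.ofReal (δ / 4) + ENNReal.ofReal (δ / 4)) + ENNReal.ofReal (δ / 4))
          + ENNReal.ofReal (δ / 4) :=
          add_le_add (add_le_add (add_le_add (hG_le _ hT1) (hG_le _ hT2)) (hG_le _ hT3))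
            (hG_le _ hT4)
      _ = ENNReal.ofReal δ := by
          rw [← ENNReal.ofReal_add (by positivity) (by positivity),
            ← ENNReal.ofReal_add (by positivity) (by positivity),
            ← ENNReal.ofReal_add (by positivity) (by positivity)]
          congr 1
          ring
  calc ENNReal.ofReal (1 - δ) = 1 - ENNReal.ofReal δ := by
        rw [← ENNReal.ofReal_one, ← ENNReal.ofReal_sub _ hδ0.le]
    _ ≤ 1 - Pr (G1 ∪ G2 ∪ G3 ∪ G4) := by
        exact tsub_le_tsub le_rfl hunion
    _ = Pr (G1 ∪ G2 ∪ G3 ∪ G4)ᶜ := by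
        rw [measure_compl ?_ (measure_ne_top _ _), measure_univ]
        have hGm : ∀ (Z : Fin N → Ω → ℝ), (∀ i, Measurable (Z i)) → ∀ c : ℝ,
            MeasurableSet {ω | c ≤ ∑ i, Z i ω} := by
          intro Z hZ c
          exact measurableSet_le measurable_const (Finset.measurable_sum _ (fun i _ => hZ i))
        exact (((hGm X hmeas _).union (hGm _ hXneg_meas _)).union (hGm Y hYmeas _)).union
          (hGm _ hYneg_meas _)
    _ ≤ Pr T := measure_mono hincl
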